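/- Let β̂ be a minimizer of g(||Y − Xβ||_2^2) + λ||β||_1 with a minimal number of nonzero entries among all minimizers, and let Ŝ = {j : β̂_j ≠ 0} be nonempty. Then the matrix X_Ŝ^T X_Ŝ is invertible (equivalently, the columns of X indexed by Ŝ are linearly independent). -/

import Mathlib

open scoped BigOperators

private lemma abs_add_sign (a b : ℝ) (h : |b| ≤ |a|) :
    |a + b| = |a| + Real.sign a * b := by
  rcases lt_trichotomy a 0 with ha | ha | ha
  · rw [Real.sign_of_neg ha, abs_of_neg ha] at *
    have : a + b ≤ 0 := by
      have := abs_le.1 h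
      linarith [this.2]
    rw [abs_of_nonpos this]; ring
  · subst ha
    simp at h
    simp [h]
  · rw [Real.sign_of_pos ha, abs_of_pos ha] at *
    have : 0 ≤ a + b := by
      have := abs_le.1 h
      linarith [this.1]
    rw [abs_of_nonneg this]; ring

theorem gram_on_support_invertible (n p : ℕ)
    (Y : Fin n → ℝ) (X : Matrix (Fin n) (Fin p) ℝ) (lam : ℝ) (hlam : 0 < lam)
    (g : ℝ → ℝ)
    (hg_convex : ConvexOn ℝ (Set.Ici (0 : ℝ)) g)
    (hg_mono : MonotoneOn g (Set.Ici (0 : ℝ)))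
    (βhat : Fin p → ℝ)
    (hmin : ∀ β : Fin p → ℝ,
        g (∑ i, (Y i - X.mulVec βhat i) ^ 2) + lam * ∑ j, |βhat j| ≤
        g (∑ i, (Y i - X.mulVec β i) ^ 2) + lam * ∑ j, |β j|)
    (hsparse : ∀ β : Fin p → ℝ,
      (∀ γ : Fin p → ℝ,
        g (∑ i, (Y i - X.mulVec β i) ^ 2) + lam * ∑ j, |β j| ≤
        g (∑ i, (Y i - X.mulVec γ i) ^ 2) + lam * ∑ j, |γ j|) →
      (Finset.univ.filter (fun j => βhat j ≠ 0)).card ≤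
        (Finset.univ.filter (fun j => β j ≠ 0)).card)
    (hS : (Finset.univ.filter (fun j => βhat j ≠ 0)).Nonempty) :
    let S : Finset (Fin p) := Finset.univ.filter (fun j => βhat j ≠ 0)
    let G : Matrix S S ℝ := fun i j => ∑ k, X k i * X k j
    IsUnit G ∧
      LinearIndependent ℝ (fun j : S => (fun i => X i j : Fin n → ℝ)) := by
  intro S G
  have hmemS : ∀ j : Fin p, j ∈ S ↔ βhat j ≠ 0 := by
    intro j; simp [S]
  -- Step 1: linear independence
  have hli : LinearIndependent ℝ (fun j : S => (fun i => X i j : Fin n → ℝ)) := by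
    rw [Fintype.linearIndependent_iff]
    intro c hc
    by_contra hne
    push_neg at hne
    obtain ⟨j1, hj1⟩ := hne
    classical
    set r : Fin p → ℝ := fun j => if h : j ∈ S then c ⟨j, h⟩ else 0 with hr_def
    have hr_supp : ∀ j, j ∉ S → r j = 0 := by
      intro j hj; simp [hr_def, hj]
    have hr_mem : ∀ (j : S), r j = c j := by
      intro j; simp [hr_def]
    -- X r = 0
    have hXr : ∀ i, X.mulVec r i = 0 := by
      intro i
      have := congrFun hc i
      simp only [Finset.sum_apply, Pi.smul_apply, smul_eq_mul, Pi.zero_apply] at this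
      rw [Matrix.mulVec]
      simp only [dotProduct]
      rw [← Finset.sum_subset (Finset.subset_univ S)]
      · rw [← this, ← Finset.sum_coe_sort S]
        refine Finset.sum_congr rfl fun j _ => ?_
        rw [hr_mem]; ring
      · intro j _ hj
        rw [hr_supp j hj, mul_zero]
    -- residual unchanged along r
    have hres : ∀ t : ℝ, X.mulVec (fun j => βhat j + t * r j) = X.mulVec βhat := by
      intro t
      funext i
      have : (fun j => βhat j + t * r j) = βhat + t • r := by
        funext j; simp [mul_comm]
      rw [this, Matrix.mulVec_add, Matrix.mulVec_smul]
      simp [hXr i]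
    -- the candidate set of coordinates with r nonzero
    have hj1S' : (j1 : Fin p) ∈ S.filter (fun j => r j ≠ 0) := by
      rw [Finset.mem_filter]
      refine ⟨j1.2, ?_⟩
      rw [hr_mem]; exact hj1
    obtain ⟨j0, hj0mem, hj0min⟩ :=
      (S.filter (fun j => r j ≠ 0)).exists_min_image (fun j => |βhat j| / |r j|)
        ⟨j1, hj1S'⟩
    rw [Finset.mem_filter] at hj0mem
    have hβj0 : βhat j0 ≠ 0 := (hmemS j0).1 hj0mem.1
    have hrj0 : r j0 ≠ 0 := hj0mem.2
    set T : ℝ := |βhat j0| / |r j0| with hT_def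
    have hT : 0 < T := div_pos (abs_pos.2 hβj0) (abs_pos.2 hrj0)
    -- key per-coordinate bound: for |t| ≤ T and any j, |t * r j| ≤ |βhat j|
    have hbound : ∀ t : ℝ, |t| ≤ T → ∀ j, |t * r j| ≤ |βhat j| := by
      intro t ht j
      by_cases hrj : r j = 0
      · simp [hrj, abs_nonneg]
      · have hjS : j ∈ S := by
          by_contra hjn
          exact hrj (hr_supp j hjn)
        have hmin' : T ≤ |βhat j| / |r j| :=
          hj0min j (Finset.mem_filter.2 ⟨hjS, hrj⟩)
        have : |t| ≤ |βhat j| / |r j| := le_trans ht hmin'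
        rw [abs_mul]
        calc |t| * |r j| ≤ (|βhat j| / |r j|) * |r j| := by
              exact mul_le_mul_of_nonneg_right this (abs_nonneg _)
          _ = |βhat j| := div_mul_cancel₀ _ (abs_ne_zero.2 hrj)
    set c0 : ℝ := ∑ j, Real.sign (βhat j) * r j with hc0_def
    -- ℓ1 norm is affine along r for |t| ≤ T
    have hl1 : ∀ t : ℝ, |t| ≤ T →
        (∑ j, |βhat j + t * r j|) = (∑ j, |βhat j|) + t * c0 := by
      intro t ht
      rw [hc0_def, Finset.mul_sum, ← Finset.sum_add_distrib]
      refine Finset.sum_congr rfl fun j _ => ?_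
      rw [abs_add_sign _ _ (hbound t ht j)]
      ring
    -- minimality forces c0 = 0
    have hslope : ∀ t : ℝ, |t| ≤ T → 0 ≤ t * c0 := by
      intro t ht
      have h1 := hmin (fun j => βhat j + t * r j)
      rw [hres t, hl1 t ht] at h1
      nlinarith
    have hc0 : c0 = 0 := by
      have h1 := hslope T (by rw [abs_of_pos hT])
      have h2 := hslope (-T) (by rw [abs_neg, abs_of_pos hT])
      nlinarith
    -- build the sparser minimizer
    set t0 : ℝ := -(βhat j0 / r j0) with ht0_def
    have ht0 : |t0| ≤ T := by
      rw [ht0_def, abs_neg, abs_div, hT_def]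
    set β' : Fin p → ℝ := fun j => βhat j + t0 * r j with hβ'_def
    have hβ'j0 : β' j0 = 0 := by
      rw [hβ'_def]
      show βhat j0 + t0 * r j0 = 0; rw [ht0_def, neg_mul, div_mul_cancel₀ _ hrj0, add_neg_cancel]
    have hβ'min : ∀ γ : Fin p → ℝ,
        g (∑ i, (Y i - X.mulVec β' i) ^ 2) + lam * ∑ j, |β' j| ≤
        g (∑ i, (Y i - X.mulVec γ i) ^ 2) + lam * ∑ j, |γ j| := by
      intro γ
      have : (∑ j, |β' j|) = ∑ j, |βhat j| := by
        rw [hβ'_def, hl1 t0 ht0, hc0]; ring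
      rw [hβ'_def, hres t0, this]
      exact hmin γ
    have hsub : (Finset.univ.filter (fun j => β' j ≠ 0)) ⊆ S.erase j0 := by
      intro j hj
      rw [Finset.mem_filter] at hj
      rw [Finset.mem_erase]
      constructor
      · rintro rfl; exact hj.2 hβ'j0
      · by_contra hjn
        apply hj.2
        have h1 : βhat j = 0 := by
          by_contra hb
          exact hjn ((hmemS j).2 hb)
        show βhat j + t0 * r j = 0
        rw [hr_supp j hjn, h1]
        ring
    have hcard := hsparse β' hβ'min
    have hlt : (Finset.univ.filter (fun j => β' j ≠ 0)).card < S.card := by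
      calc (Finset.univ.filter (fun j => β' j ≠ 0)).card
          ≤ (S.erase j0).card := Finset.card_le_card hsub
        _ < S.card := Finset.card_erase_lt_of_mem hj0mem.1
    exact absurd hcard (not_le.2 hlt)
  refine ⟨?_, hli⟩
  -- Step 2: Gram matrix invertible
  rw [← Matrix.mulVec_injective_iff_isUnit]
  have hker : ∀ v : S → ℝ, G.mulVec v = 0 → v = 0 := by
    intro v hv
    have hquad : (∑ k, (∑ j : S, X k j * v j) ^ 2) = 0 := by
      have h1 : dotProduct v (G.mulVec v) = 0 := by rw [hv]; simp
      rw [← h1]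
      simp only [dotProduct, Matrix.mulVec, G]
      simp only [sq, Finset.sum_mul, Finset.mul_sum]
      rw [Finset.sum_comm]
      refine Finset.sum_congr rfl fun i _ => ?_
      rw [Finset.sum_comm]
      refine Finset.sum_congr rfl fun j _ => ?_
      refine Finset.sum_congr rfl fun k _ => ?_
      ring
    have hAv : ∀ k, (∑ j : S, X k j * v j) = 0 := by
      intro k
      have := (Finset.sum_eq_zero_iff_of_nonneg (fun k _ => sq_nonneg _)).1 hquad k
        (Finset.mem_univ k)
      exact pow_eq_zero_iff (by norm_num) |>.1 this
    funext j
    rw [Fintype.linearIndependent_iff] at hli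
    refine hli v ?_ j
    funext k
    simp only [Finset.sum_apply, Pi.smul_apply, smul_eq_mul, Pi.zero_apply]
    rw [← hAv k]
    exact Finset.sum_congr rfl fun j _ => mul_comm _ _
  intro a b hab
  have : G.mulVec (a - b) = 0 := by
    rw [Matrix.mulVec_sub, hab, sub_self]
  have := hker _ this
  exact sub_eq_zero.1 this
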